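/- Let Ω ⊂ E, F, h, 𝔹 be as above and suppose the Hartogs domain Ω_h = {(z,w) ∈ Ω × F : h(z,w) < 1} is hyperbolic. Then Ω is hyperbolic and inf_{(z,w) ∈ K × ∂𝔹} h(z,w) > 0 for every compact K ⊂ Ω. -/

import Mathlib

open Filter Metric Set Topology MeasureTheory

/-- The Lempert function of a domain `Ω` in a complex Banach space. -/
noncomputable def lempert {E : Type*} [NormedAddCommGroup E] [NormedSpace ℂ E]
    (Ω : Set E) (z w : E) : ℝ :=
  sInf {r : ℝ | ∃ (f : ℂ → E) (l : ℂ), DifferentiableOn ℂ f (ball 0 1) ∧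
    MapsTo f (ball 0 1) Ω ∧ f 0 = z ∧ f l = w ∧ l ∈ ball (0:ℂ) 1 ∧ r = ‖l‖}

/-- The Poincaré distance from `0` to a point at "radius" `r`. -/
noncomputable def poincareDist (r : ℝ) : ℝ := (1/2) * Real.log ((1+r)/(1-r))

/-- The Kobayashi pseudo-distance of a domain `Ω`, defined via chains. -/
noncomputable def kobayashi {E : Type*} [NormedAddCommGroup E] [NormedSpace ℂ E]
    (Ω : Set E) (z w : E) : ℝ :=
  sInf {r : ℝ | ∃ (n : ℕ) (c : ℕ → E), c 0 = z ∧ c n = w ∧ (∀ i, i ≤ n → c i ∈ Ω) ∧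
    r = ∑ i ∈ Finset.range n, poincareDist (lempert Ω (c i) (c (i+1)))}

/-- `Ω` is (Kobayashi) hyperbolic: `kobayashi Ω` is a distance defining the norm topology. -/
def IsHyperbolic {E : Type*} [NormedAddCommGroup E] [NormedSpace ℂ E] (Ω : Set E) : Prop :=
  (∀ z ∈ Ω, ∀ w ∈ Ω, kobayashi Ω z w = 0 → z = w) ∧
  (∀ z ∈ Ω, ∀ ε > 0, ∃ δ > 0, ∀ w ∈ Ω, kobayashi Ω z w < δ → ‖w - z‖ < ε) ∧
  (∀ z ∈ Ω, ∀ ε > 0, ∃ δ > 0, ∀ w ∈ Ω, ‖w - z‖ < δ → kobayashi Ω z w < ε)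

/-- A sequence in `Ω` which is Cauchy for the Kobayashi pseudo-distance. -/
def KCauchy {E : Type*} [NormedAddCommGroup E] [NormedSpace ℂ E]
    (Ω : Set E) (x : ℕ → E) : Prop :=
  ∀ ε > 0, ∃ N, ∀ m ≥ N, ∀ n ≥ N, kobayashi Ω (x m) (x n) < ε

/-- `Ω` is complete hyperbolic. -/
def IsCompleteHyperbolic {E : Type*} [NormedAddCommGroup E] [NormedSpace ℂ E]
    (Ω : Set E) : Prop :=
  IsHyperbolic Ω ∧ ∀ x : ℕ → E, (∀ n, x n ∈ Ω) → KCauchy Ω x →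
    ∃ p ∈ Ω, Tendsto x atTop (nhds p)

/-- The filter of neighborhoods of `∞` (traces on `Ω` taken by `⊓ 𝓟 Ω` where needed). -/
noncomputable def atInfFilter (E : Type*) [NormedAddCommGroup E] : Filter E :=
  Filter.comap (fun z : E => ‖z‖) Filter.atTop

/-- The boundary point described by the filter `l` (either `𝓝 a` for `a ∈ ∂Ω`, or the
filter at `∞`) is a `k'`-point of `Ω`: no `k_Ω`-Cauchy sequence of `Ω` converges to it. -/
def KPrimeAt {E : Type*} [NormedAddCommGroup E] [NormedSpace ℂ E]
    (Ω : Set E) (l : Filter E) : Prop :=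
  ¬ ∃ x : ℕ → E, (∀ n, x n ∈ Ω) ∧ KCauchy Ω x ∧ Tendsto x atTop l

/-- A real-valued function is subharmonic on `U ⊆ ℂ`: upper semicontinuous and
satisfying the sub-mean-value inequality on closed disks contained in `U`. -/
def SubharmonicOnR (v : ℂ → ℝ) (U : Set ℂ) : Prop :=
  UpperSemicontinuousOn v U ∧ ∀ c : ℂ, ∀ r : ℝ, 0 < r → closedBall c r ⊆ U →
    v c ≤ (2 * Real.pi)⁻¹ *
      ∫ θ in (0:ℝ)..(2*Real.pi), v (c + (r : ℂ) * Complex.exp (θ * Complex.I))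

/-- Plurisubharmonicity on a domain of a complex Banach space. -/
def PlurisubharmonicOn {E : Type*} [NormedAddCommGroup E] [NormedSpace ℂ E]
    (u : E → ℝ) (Ω : Set E) : Prop :=
  UpperSemicontinuousOn u Ω ∧
    ∀ a b : E, SubharmonicOnR (fun t => u (a + t • b)) {t : ℂ | a + t • b ∈ Ω}

section Helpers

variable {E : Type*} [NormedAddCommGroup E] [NormedSpace ℂ E]
variable {E' : Type*} [NormedAddCommGroup E'] [NormedSpace ℂ E']

/-- The set of disc parameters defining `lempert`. -/
def discSet (Ω : Set E) (z w : E) : Set ℝ :=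
  {r : ℝ | ∃ (f : ℂ → E) (l : ℂ), DifferentiableOn ℂ f (ball 0 1) ∧
    MapsTo f (ball 0 1) Ω ∧ f 0 = z ∧ f l = w ∧ l ∈ ball (0:ℂ) 1 ∧ r = ‖l‖}

lemma lempert_eq_sInf (Ω : Set E) (z w : E) : lempert Ω z w = sInf (discSet Ω z w) := rfl

lemma discSet_nonneg {Ω : Set E} {z w : E} {r : ℝ} (hr : r ∈ discSet Ω z w) : 0 ≤ r := by
  obtain ⟨f, l, -, -, -, -, -, rfl⟩ := hr; exact norm_nonneg l

lemma discSet_bddBelow (Ω : Set E) (z w : E) : BddBelow (discSet Ω z w) :=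
  ⟨0, fun _ hr => discSet_nonneg hr⟩

lemma lempert_nonneg (Ω : Set E) (z w : E) : 0 ≤ lempert Ω z w :=
  Real.sInf_nonneg fun _ hx => discSet_nonneg hx

lemma lempert_lt_one (Ω : Set E) (z w : E) : lempert Ω z w < 1 := by
  rcases eq_empty_or_nonempty (discSet Ω z w) with h | ⟨r, hr⟩
  · rw [lempert_eq_sInf, h, Real.sInf_empty]; norm_num
  · obtain ⟨f, l, -, -, -, -, hl, rfl⟩ := id hr
    exact lt_of_le_of_lt (csInf_le (discSet_bddBelow Ω z w) hr)
      (by simpa using mem_ball_zero_iff.1 hl)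

lemma discSet_mono (φ : E → E') (hφ : Differentiable ℂ φ) {Ω : Set E} {Ω' : Set E'}
    (hm : MapsTo φ Ω Ω') (z w : E) : discSet Ω z w ⊆ discSet Ω' (φ z) (φ w) := by
  rintro r ⟨f, l, hdf, hmf, h0, hl, hlb, rfl⟩
  exact ⟨φ ∘ f, l, hφ.comp_differentiableOn hdf, hm.comp hmf,
    by simp [Function.comp, h0], by simp [Function.comp, hl], hlb, rfl⟩

lemma poincareDist_nonneg {r : ℝ} (h0 : 0 ≤ r) (h1 : r < 1) : 0 ≤ poincareDist r := by
  have : (1:ℝ) ≤ (1+r)/(1-r) := (one_le_div (by linarith)).2 (by linarith)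
  exact mul_nonneg (by norm_num) (Real.log_nonneg this)

lemma poincareDist_mono {a b : ℝ} (ha : 0 ≤ a) (hab : a ≤ b) (hb : b < 1) :
    poincareDist a ≤ poincareDist b := by
  have h1 : 0 < 1 - b := by linarith
  have h2 : 0 < 1 - a := by linarith
  have hpos : 0 < (1+a)/(1-a) := div_pos (by linarith) h2
  have hpos' : 0 < (1+b)/(1-b) := div_pos (by linarith) h1
  have hle : (1+a)/(1-a) ≤ (1+b)/(1-b) := by rw [div_le_div_iff₀ h2 h1]; nlinarith
  exact mul_le_mul_of_nonneg_left ((Real.log_le_log_iff hpos hpos').2 hle) (by norm_num)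

lemma poincareDist_le_two_mul {r : ℝ} (h0 : 0 ≤ r) (h1 : r ≤ 1/2) :
    poincareDist r ≤ 2 * r := by
  have hr : 0 < 1 - r := by linarith
  have hpos : 0 < (1+r)/(1-r) := by positivity
  have hlog : Real.log ((1+r)/(1-r)) ≤ (1+r)/(1-r) - 1 := Real.log_le_sub_one_of_pos hpos
  have h2 : (1+r)/(1-r) - 1 ≤ 4 * r := by
    rw [sub_le_iff_le_add, div_le_iff₀ hr]; nlinarith
  unfold poincareDist; linarith

/-- The set of chain sums defining `kobayashi`. -/
def chainSet (Ω : Set E) (z w : E) : Set ℝ :=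
  {r : ℝ | ∃ (n : ℕ) (c : ℕ → E), c 0 = z ∧ c n = w ∧ (∀ i, i ≤ n → c i ∈ Ω) ∧
    r = ∑ i ∈ Finset.range n, poincareDist (lempert Ω (c i) (c (i+1)))}

lemma kobayashi_eq_sInf (Ω : Set E) (z w : E) :
    kobayashi Ω z w = sInf (chainSet Ω z w) := rfl

lemma chainSet_nonneg {Ω : Set E} {z w : E} {r : ℝ} (hr : r ∈ chainSet Ω z w) : 0 ≤ r := by
  obtain ⟨n, c, -, -, -, rfl⟩ := hr
  exact Finset.sum_nonneg fun i _ =>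
    poincareDist_nonneg (lempert_nonneg _ _ _) (lempert_lt_one _ _ _)

lemma chainSet_bddBelow (Ω : Set E) (z w : E) : BddBelow (chainSet Ω z w) :=
  ⟨0, fun _ hr => chainSet_nonneg hr⟩

lemma chainSet_nonempty {Ω : Set E} {z w : E} (hz : z ∈ Ω) (hw : w ∈ Ω) :
    (chainSet Ω z w).Nonempty := by
  refine ⟨_, 1, fun i => if i = 0 then z else w, if_pos rfl, by norm_num, ?_, rfl⟩
  intro i hi
  interval_cases i <;> simp [hz, hw]

lemma kobayashi_nonneg (Ω : Set E) (z w : E) : 0 ≤ kobayashi Ω z w :=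
  Real.sInf_nonneg fun _ hx => chainSet_nonneg hx

lemma kobayashi_le_poincare {Ω : Set E} {z w : E} (hz : z ∈ Ω) (hw : w ∈ Ω) :
    kobayashi Ω z w ≤ poincareDist (lempert Ω z w) := by
  rw [kobayashi_eq_sInf]
  refine csInf_le (chainSet_bddBelow Ω z w)
    ⟨1, fun i => if i = 0 then z else w, if_pos rfl, by norm_num, ?_, ?_⟩
  · intro i hi; interval_cases i <;> simp [hz, hw]
  · simp

lemma kobayashi_triangle {Ω : Set E} {z w v : E} (hz : z ∈ Ω) (hw : w ∈ Ω) (hv : v ∈ Ω) :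
    kobayashi Ω z v ≤ kobayashi Ω z w + kobayashi Ω w v := by
  have key : ∀ a ∈ chainSet Ω z w, ∀ b ∈ chainSet Ω w v, kobayashi Ω z v ≤ a + b := by
    rintro a ⟨n, c, hc0, hcn, hcm, rfl⟩ b ⟨m, d, hd0, hdm, hdmem, rfl⟩
    rw [kobayashi_eq_sInf]
    apply csInf_le (chainSet_bddBelow Ω z v)
    refine ⟨n + m, fun i => if i < n then c i else d (i - n), ?_, ?_, ?_, ?_⟩
    · by_cases h : 0 < n
      · simp [h, hc0]
      · have hn0 : n = 0 := by omega
        subst hn0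
        simp only [lt_self_iff_false, if_false, Nat.sub_zero]
        rw [hd0, ← hcn, hc0]
    · have h : ¬ (n + m < n) := by omega
      simp only [h, if_false, Nat.add_sub_cancel_left, hdm]
    · intro i hi
      by_cases h : i < n
      · simpa [h] using hcm i h.le
      · simpa [h] using hdmem (i - n) (by omega)
    · simp only [Finset.sum_range_add]
      congr 1
      · apply Finset.sum_congr rfl
        intro i hi
        have hilt : i < n := Finset.mem_range.1 hi
        have he1 : (if i < n then c i else d (i - n)) = c i := if_pos hilt
        have he2 : (if i + 1 < n then c (i+1) else d (i + 1 - n)) = c (i+1) := by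
          by_cases h : i + 1 < n
          · exact if_pos h
          · have : i + 1 = n := by omega
            rw [if_neg h, this, Nat.sub_self, hd0, ← hcn]
        rw [he1, he2]
      · apply Finset.sum_congr rfl
        intro j hj
        have h1 : ¬ (n + j < n) := by omega
        have h2 : ¬ (n + j + 1 < n) := by omega
        have e1 : (if n + j < n then c (n+j) else d (n + j - n)) = d j := by
          rw [if_neg h1]; congr 1; omega
        have e2 : (if n + j + 1 < n then c (n+j+1) else d (n + j + 1 - n)) = d (j+1) := by
          rw [if_neg h2]; congr 1; omega
        rw [e1, e2]
  have hA := chainSet_nonempty hz hw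
  have hB := chainSet_nonempty hw hv
  have h1 : ∀ b ∈ chainSet Ω w v, kobayashi Ω z v - b ≤ kobayashi Ω z w := by
    intro b hb
    rw [kobayashi_eq_sInf (z := z) (w := w)]
    exact le_csInf hA fun a ha => by linarith [key a ha b hb]
  have h2 : kobayashi Ω z v - kobayashi Ω w v ≤ kobayashi Ω z w := by
    have : ∀ b ∈ chainSet Ω w v, kobayashi Ω z v - kobayashi Ω z w ≤ b := by
      intro b hb; linarith [h1 b hb]
    have := le_csInf hB this
    rw [← kobayashi_eq_sInf] at this
    linarith
  linarith

lemma lempert_le_div {Ω : Set E} {z : E} {ρ : ℝ} (hρ : 0 < ρ) (hb : ball z ρ ⊆ Ω) {w : E}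
    (hw : ‖w - z‖ < ρ) : lempert Ω z w ≤ ‖w - z‖ / ρ := by
  have hzΩ : z ∈ Ω := hb (mem_ball_self hρ)
  rcases eq_or_ne w z with rfl | hne
  · rw [lempert_eq_sInf]
    have : (0:ℝ) ∈ discSet Ω w w :=
      ⟨fun _ => w, 0, differentiableOn_const _, fun x _ => hzΩ, rfl, rfl,
        mem_ball_self one_pos, by simp⟩
    simpa using csInf_le (discSet_bddBelow Ω w w) this
  · set u := w - z with hu
    have hu0 : ‖u‖ ≠ 0 := norm_ne_zero_iff.2 (sub_ne_zero.2 hne)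
    have hupos : 0 < ‖u‖ := lt_of_le_of_ne (norm_nonneg u) (Ne.symm hu0)
    rw [lempert_eq_sInf]
    apply csInf_le (discSet_bddBelow Ω z w)
    refine ⟨fun lam => z + (lam * ((ρ / ‖u‖ : ℝ) : ℂ)) • u, ((‖u‖ / ρ : ℝ) : ℂ),
      ?_, ?_, by simp, ?_, ?_, ?_⟩
    · apply DifferentiableOn.const_add
      exact ((differentiable_id.mul (differentiable_const _)).smul_const u).differentiableOn
    · intro lam hlam
      apply hb
      rw [mem_ball_iff_norm]
      have : z + (lam * ((ρ / ‖u‖ : ℝ) : ℂ)) • u - z = (lam * ((ρ / ‖u‖ : ℝ) : ℂ)) • u := by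
        abel
      rw [this, norm_smul, norm_mul, Complex.norm_real]
      have hlam1 : ‖lam‖ < 1 := by simpa using mem_ball_zero_iff.1 hlam
      have : ‖(ρ / ‖u‖ : ℝ)‖ = ρ / ‖u‖ := abs_of_pos (by positivity)
      rw [this]
      calc ‖lam‖ * (ρ / ‖u‖) * ‖u‖ = ‖lam‖ * ρ := by field_simp
        _ < 1 * ρ := by exact mul_lt_mul_of_pos_right hlam1 hρ
        _ = ρ := one_mul ρ
    · have : ((‖u‖ / ρ : ℝ) : ℂ) * ((ρ / ‖u‖ : ℝ) : ℂ) = 1 := by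
        rw [← Complex.ofReal_mul]
        norm_cast
        field_simp
      show z + (((‖u‖ / ρ : ℝ) : ℂ) * ((ρ / ‖u‖ : ℝ) : ℂ)) • u = w
      rw [this, one_smul, hu]; abel
    · rw [mem_ball_zero_iff, Complex.norm_real, Real.norm_eq_abs,
        abs_of_pos (by positivity), div_lt_one hρ]
      exact hw
    · rw [Complex.norm_real, Real.norm_eq_abs, abs_of_pos (by positivity)]

end Helpers

/-- Corollary 3.4, necessity: if the Hartogs domain `Ω_h` is hyperbolic then `Ω` is
hyperbolic and `h` is bounded below on `K × ∂𝔹` for every compact `K ⊆ Ω`. -/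
theorem hartogs_hyperbolic_necessary {E F : Type*} [NormedAddCommGroup E]
    [NormedSpace ℂ E] [CompleteSpace E] [NormedAddCommGroup F] [NormedSpace ℂ F]
    [CompleteSpace F]
    (Ω : Set E) (hΩo : IsOpen Ω) (hΩc : IsConnected Ω)
    (h : E × F → ℝ) (hnn : ∀ z ∈ Ω, ∀ w : F, 0 ≤ h (z, w))
    (husc : UpperSemicontinuousOn h (Ω ×ˢ (Set.univ : Set F)))
    (hhom : ∀ z ∈ Ω, ∀ w : F, ∀ l : ℂ, h (z, l • w) = ‖l‖ * h (z, w))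
    (hhyp : IsHyperbolic {p : E × F | p.1 ∈ Ω ∧ h p < 1}) :
    IsHyperbolic Ω ∧ ∀ K : Set E, K ⊆ Ω → IsCompact K →
      ∃ c > (0:ℝ), ∀ z ∈ K, ∀ w : F, ‖w‖ = 1 → c ≤ h (z, w) := by
  set Ωh : Set (E × F) := {p : E × F | p.1 ∈ Ω ∧ h p < 1} with hΩhdef
  have hzero : ∀ z ∈ Ω, h (z, (0:F)) = 0 := by
    intro z hz
    have := hhom z hz 0 0
    simpa using this
  have hι : MapsTo (fun z : E => (z, (0:F))) Ω Ωh := fun z hz =>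
    ⟨hz, by show h (z, (0:F)) < 1; rw [hzero z hz]; norm_num⟩
  have hιdiff : Differentiable ℂ (fun z : E => (z, (0:F))) :=
    differentiable_id.prodMk (differentiable_const _)
  have hπm : MapsTo (Prod.fst : E × F → E) Ωh Ω := fun p hp => hp.1
  have hlem : ∀ a b : E, lempert Ωh (a, (0:F)) (b, (0:F)) = lempert Ω a b := by
    intro a b
    rw [lempert_eq_sInf, lempert_eq_sInf]
    congr 1
    apply Set.Subset.antisymm
    · exact discSet_mono (Prod.fst) differentiable_fst hπm (a, 0) (b, 0)
    · exact discSet_mono _ hιdiff hι a b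
  have hkob : ∀ a ∈ Ω, ∀ b ∈ Ω,
      kobayashi Ωh (a, (0:F)) (b, (0:F)) ≤ kobayashi Ω a b := by
    intro a ha b hb
    rw [kobayashi_eq_sInf, kobayashi_eq_sInf]
    apply csInf_le_csInf (chainSet_bddBelow _ _ _) (chainSet_nonempty ha hb)
    rintro r ⟨n, c, hc0, hcn, hcm, rfl⟩
    refine ⟨n, fun i => (c i, 0), by simp only [hc0], by simp only [hcn],
      fun i hi => hι (hcm i hi), ?_⟩
    simp only [hlem]
  constructor
  · refine ⟨?_, ?_, ?_⟩
    · -- separation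
      intro z hz w hw h0
      have h1 : kobayashi Ωh (z, (0:F)) (w, (0:F)) ≤ 0 := h0 ▸ hkob z hz w hw
      have h2 : kobayashi Ωh (z, (0:F)) (w, (0:F)) = 0 :=
        le_antisymm h1 (kobayashi_nonneg _ _ _)
      have h3 := hhyp.1 (z, 0) (hι hz) (w, 0) (hι hw) h2
      exact congrArg Prod.fst h3
    · -- small kobayashi implies small norm
      intro z hz ε hε
      obtain ⟨δ, hδ0, hδ⟩ := hhyp.2.1 (z, 0) (hι hz) ε hε
      refine ⟨δ, hδ0, fun w hw hk => ?_⟩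
      have h1 := hδ (w, 0) (hι hw) (lt_of_le_of_lt (hkob z hz w hw) hk)
      have h2 : ‖w - z‖ ≤ ‖((w, (0:F)) - (z, 0) : E × F)‖ := by
        rw [Prod.mk_sub_mk, Prod.norm_def]
        exact le_max_left _ _
      linarith
    · -- small norm implies small kobayashi
      intro z hz ε hε
      obtain ⟨ρ, hρ0, hball⟩ := Metric.isOpen_iff.1 hΩo z hz
      refine ⟨min (ρ/2) (ε * ρ / 8), by positivity, fun w hw hwz => ?_⟩
      have hwρ : ‖w - z‖ < ρ :=
        lt_of_lt_of_le hwz (le_trans (min_le_left _ _) (by linarith))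
      have h1 : lempert Ω z w ≤ ‖w - z‖ / ρ := lempert_le_div hρ0 hball hwρ
      have h2 : ‖w - z‖ / ρ ≤ 1/2 := by
        rw [div_le_iff₀ hρ0]
        have := lt_of_lt_of_le hwz (min_le_left _ _)
        linarith
      have h3 : kobayashi Ω z w ≤ poincareDist (lempert Ω z w) :=
        kobayashi_le_poincare hz hw
      have h4 : poincareDist (lempert Ω z w) ≤ poincareDist (‖w - z‖ / ρ) :=
        poincareDist_mono (lempert_nonneg _ _ _) h1 (by linarith)
      have h5 : poincareDist (‖w - z‖ / ρ) ≤ 2 * (‖w - z‖ / ρ) :=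
        poincareDist_le_two_mul (by positivity) h2
      have h6 : 2 * (‖w - z‖ / ρ) < ε := by
        rw [mul_comm, div_mul_eq_mul_div, div_lt_iff₀ hρ0]
        have h7 := lt_of_lt_of_le hwz (min_le_right _ _)
        nlinarith [mul_pos hε hρ0]
      linarith
  · -- part 2
    intro K hKΩ hK
    by_contra hcon
    push_neg at hcon
    have H : ∀ n : ℕ, ∃ z ∈ K, ∃ w : F, ‖w‖ = 1 ∧ h (z, w) < 1/((n:ℝ)+1) := by
      intro n
      obtain ⟨zz, hzz, ww, hww, hlt⟩ := hcon (1/((n:ℝ)+1)) (by positivity)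
      exact ⟨zz, hzz, ww, hww, hlt⟩
    choose z hzK w hw1 hwh using H
    obtain ⟨z₀, hz₀K, φ, hφmono, hφt⟩ := hK.tendsto_subseq hzK
    have hz₀ : z₀ ∈ Ω := hKΩ hz₀K
    have hp : ((z₀, (0:F)) : E × F) ∈ Ωh := hι hz₀
    obtain ⟨δ, hδ0, hδ⟩ := hhyp.2.1 (z₀, 0) hp (1/4) (by norm_num)
    obtain ⟨δ', hδ'0, hδ'⟩ := hhyp.2.2 (z₀, 0) hp (δ/2) (by linarith)
    obtain ⟨N₁, hN₁⟩ := (Metric.tendsto_atTop.1 hφt) δ' hδ'0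
    obtain ⟨N₂, hN₂⟩ := exists_nat_one_div_lt (show (0:ℝ) < δ/2 by linarith)
    set n := φ (max N₁ N₂) with hn
    have hzn : z n ∈ Ω := hKΩ (hzK n)
    have hdist : ‖z n - z₀‖ < δ' := by
      have hd := hN₁ (max N₁ N₂) (le_max_left _ _)
      rw [Function.comp_apply, dist_eq_norm, ← hn] at hd
      exact hd
    have hnN₂ : (N₂ : ℝ) ≤ (n : ℝ) := by
      have h1 : N₂ ≤ max N₁ N₂ := le_max_right _ _
      have h2 : max N₁ N₂ ≤ φ (max N₁ N₂) := hφmono.le_apply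
      exact_mod_cast le_trans h1 h2
    have hsmall : 1/((n:ℝ)+1) < δ/2 :=
      lt_of_le_of_lt (one_div_le_one_div_of_le (by positivity) (by linarith)) hN₂
    have hhn : h (z n, w n) < 1/((n:ℝ)+1) := hwh n
    have hhn0 : 0 ≤ h (z n, w n) := hnn _ hzn _
    have hone : 1/((n:ℝ)+1) ≤ 1 := by
      rw [div_le_one (by positivity)]
      linarith [Nat.cast_nonneg (α := ℝ) n]
    set q : E × F := (z n, (1/2 : ℂ) • w n) with hq
    have ha : ((z n, (0:F)) : E × F) ∈ Ωh := hι hzn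
    have hqΩh : q ∈ Ωh := by
      refine ⟨hzn, ?_⟩
      show h (z n, (1/2 : ℂ) • w n) < 1
      rw [hhom _ hzn (w n) (1/2)]
      have hhalf : ‖(1/2 : ℂ)‖ = 1/2 := by norm_num
      rw [hhalf]
      linarith
    have hnpos : (0:ℝ) < (n:ℝ)+1 := by positivity
    have hlemq : lempert Ωh (z n, (0:F)) q ≤ 1/(2*((n:ℝ)+1)) := by
      rw [lempert_eq_sInf]
      have hmem : (1/(2*((n:ℝ)+1))) ∈ discSet Ωh (z n, (0:F)) q := by
        refine ⟨fun lam => (z n, ((((n:ℝ)+1 : ℝ) : ℂ) * lam) • w n),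
          ((1/(2*((n:ℝ)+1)) : ℝ) : ℂ), ?_, ?_, ?_, ?_, ?_, ?_⟩
        · exact ((differentiable_const _).prodMk
            (((differentiable_const _).mul differentiable_id).smul_const _)).differentiableOn
        · intro lam hlam
          refine ⟨hzn, ?_⟩
          show h (z n, ((((n:ℝ)+1 : ℝ) : ℂ) * lam) • w n) < 1
          rw [hhom _ hzn (w n) _]
          have h1 : ‖(((n:ℝ)+1 : ℝ) : ℂ) * lam‖ = ((n:ℝ)+1) * ‖lam‖ := by
            rw [norm_mul, Complex.norm_real, Real.norm_eq_abs, abs_of_pos hnpos]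
          rw [h1]
          have hlam1 : ‖lam‖ < 1 := by simpa using mem_ball_zero_iff.1 hlam
          have key : ((n:ℝ)+1) * h (z n, w n) < 1 := by
            calc ((n:ℝ)+1) * h (z n, w n) < ((n:ℝ)+1) * (1/((n:ℝ)+1)) :=
                  mul_lt_mul_of_pos_left hhn hnpos
              _ = 1 := by field_simp
          calc ((n:ℝ)+1) * ‖lam‖ * h (z n, w n)
              ≤ (((n:ℝ)+1) * 1) * h (z n, w n) := by
                apply mul_le_mul_of_nonneg_right _ hhn0
                exact mul_le_mul_of_nonneg_left hlam1.le hnpos.le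
            _ = ((n:ℝ)+1) * h (z n, w n) := by ring
            _ < 1 := key
        · show (z n, ((((n:ℝ)+1 : ℝ) : ℂ) * 0) • w n) = (z n, (0:F))
          simp
        · show (z n, ((((n:ℝ)+1 : ℝ) : ℂ) * (((1/(2*((n:ℝ)+1)) : ℝ)) : ℂ)) • w n) = q
          rw [hq]
          congr 1
          rw [← Complex.ofReal_mul]
          have hmul : ((n:ℝ)+1) * (1/(2*((n:ℝ)+1))) = 1/2 := by field_simp
          rw [hmul]
          norm_num
        · rw [mem_ball_zero_iff, Complex.norm_real, Real.norm_eq_abs,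
            abs_of_pos (by positivity), div_lt_one (by positivity)]
          linarith [Nat.cast_nonneg (α := ℝ) n]
        · rw [Complex.norm_real, Real.norm_eq_abs, abs_of_pos (by positivity)]
      exact csInf_le (discSet_bddBelow _ _ _) hmem
    have hkq : kobayashi Ωh (z n, (0:F)) q < δ/2 := by
      have h3 := kobayashi_le_poincare ha hqΩh
      have hhalf : 1/(2*((n:ℝ)+1)) ≤ 1/2 := by
        apply one_div_le_one_div_of_le (by norm_num)
        linarith [Nat.cast_nonneg (α := ℝ) n]
      have h4 : poincareDist (lempert Ωh (z n, (0:F)) q)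
          ≤ poincareDist (1/(2*((n:ℝ)+1))) :=
        poincareDist_mono (lempert_nonneg _ _ _) hlemq (by linarith)
      have h5 : poincareDist (1/(2*((n:ℝ)+1))) ≤ 2 * (1/(2*((n:ℝ)+1))) :=
        poincareDist_le_two_mul (by positivity) hhalf
      have h6 : 2 * (1/(2*((n:ℝ)+1))) = 1/((n:ℝ)+1) := by field_simp
      linarith
    have hk1 : kobayashi Ωh (z₀, (0:F)) (z n, (0:F)) < δ/2 := by
      apply hδ' (z n, 0) ha
      show ‖((z n, (0:F)) : E × F) - (z₀, 0)‖ < δ'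
      rw [Prod.mk_sub_mk, Prod.norm_def]
      exact max_lt hdist (by simpa using hδ'0)
    have htri : kobayashi Ωh (z₀, (0:F)) q
        ≤ kobayashi Ωh (z₀, (0:F)) (z n, (0:F)) + kobayashi Ωh (z n, (0:F)) q :=
      kobayashi_triangle hp ha hqΩh
    have hfin : kobayashi Ωh (z₀, (0:F)) q < δ := by linarith
    have hlt := hδ q hqΩh hfin
    have hge : (1/2 : ℝ) ≤ ‖q - ((z₀, (0:F)) : E × F)‖ := by
      rw [hq, Prod.mk_sub_mk, Prod.norm_def]
      have h7 : ‖(1/2:ℂ) • w n - 0‖ = 1/2 := by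
        rw [sub_zero, norm_smul, hw1 n]
        norm_num
      calc (1/2 : ℝ) = ‖(1/2:ℂ) • w n - 0‖ := h7.symm
        _ ≤ max ‖z n - z₀‖ ‖(1/2:ℂ) • w n - 0‖ := le_max_right _ _
    linarith
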